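/- arXiv:2605.19773 — 2 statements merged into one kernel-verified Lean document; each statement's English description precedes it below -/
import Mathlib

section
/- Let p ≥ 5 be a prime with p ≡ 1 (mod 3). Define c(n) = 3·Σ_{d|n} χ₃(d)d⁴ − 27·Σ_{d|n} χ₃(n/d)d⁴. Then for all m ≥ 1 and r ≥ 1, c(m·p^r) ≡ c(m·p^{r−1}) (mod p^{4r}). -/
/-- The nontrivial Dirichlet character mod 3, as a function on ℕ with values in ℤ. -/
def chi3 (n : ℕ) : ℤ := if n % 3 = 1 then 1 else if n % 3 = 2 then -1 else 0

/-- `c(n) = 3 Σ_{d ∣ n} χ₃(d) d⁴ − 27 Σ_{d ∣ n} χ₃(n/d) d⁴`. -/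
def cMix (n : ℕ) : ℤ :=
  3 * (∑ d ∈ n.divisors, chi3 d * (d : ℤ) ^ 4)
    - 27 * (∑ d ∈ n.divisors, chi3 (n / d) * (d : ℤ) ^ 4)

open ArithmeticFunction Finset
open scoped ArithmeticFunction.zeta

lemma chi3_mul (a b : ℕ) : chi3 (a * b) = chi3 a * chi3 b := by
  unfold chi3
  rw [Nat.mul_mod]
  have ha : a % 3 = 0 ∨ a % 3 = 1 ∨ a % 3 = 2 := by omega
  have hb : b % 3 = 0 ∨ b % 3 = 1 ∨ b % 3 = 2 := by omega
  rcases ha with h | h | h <;> rcases hb with h' | h' | h' <;> simp [h, h']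

/-- `χ₃(n) n⁴` as an arithmetic function. -/
def chiPow : ArithmeticFunction ℤ := ⟨fun n => chi3 n * (n : ℤ) ^ 4, by simp [chi3]⟩

/-- `χ₃(n)` as an arithmetic function. -/
def chiA : ArithmeticFunction ℤ := ⟨fun n => chi3 n, by simp [chi3]⟩

/-- `n⁴` as an arithmetic function. -/
def id4 : ArithmeticFunction ℤ := ⟨fun n => (n : ℤ) ^ 4, by simp⟩

def Ffun : ArithmeticFunction ℤ := chiPow * (ζ : ArithmeticFunction ℤ)
def Gfun : ArithmeticFunction ℤ := chiA * id4

lemma chiPow_apply (n : ℕ) : chiPow n = chi3 n * (n : ℤ) ^ 4 := rfl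
lemma chiA_apply (n : ℕ) : chiA n = chi3 n := rfl
lemma id4_apply (n : ℕ) : id4 n = (n : ℤ) ^ 4 := rfl

lemma chiPow_mult : (chiPow).IsMultiplicative := by
  refine ⟨by simp [chiPow_apply, chi3], fun {a b} _ => ?_⟩
  simp only [chiPow_apply, chi3_mul, Nat.cast_mul]
  ring

lemma chiA_mult : (chiA).IsMultiplicative := by
  refine ⟨by simp [chiA_apply, chi3], fun {a b} _ => ?_⟩
  simp [chiA_apply, chi3_mul]

lemma id4_mult : (id4).IsMultiplicative := by
  refine ⟨by simp [id4_apply], fun {a b} _ => ?_⟩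
  simp only [id4_apply, Nat.cast_mul]
  ring

lemma Ffun_mult : (Ffun).IsMultiplicative :=
  chiPow_mult.mul (isMultiplicative_zeta.natCast)

lemma Gfun_mult : (Gfun).IsMultiplicative := chiA_mult.mul id4_mult

lemma Ffun_apply (n : ℕ) : Ffun n = ∑ d ∈ n.divisors, chi3 d * (d : ℤ) ^ 4 := by
  rw [Ffun, coe_mul_zeta_apply]
  rfl

lemma Gfun_apply (n : ℕ) : Gfun n = ∑ d ∈ n.divisors, chi3 (n / d) * (d : ℤ) ^ 4 := by
  rw [Gfun, mul_apply]
  rw [Nat.sum_divisorsAntidiagonal' (f := fun a b => chiA a * id4 b)]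
  rfl

lemma cMix_eq (n : ℕ) : cMix n = 3 * Ffun n - 27 * Gfun n := by
  rw [cMix, Ffun_apply, Gfun_apply]

lemma chi3_pow (p : ℕ) (hsplit : p % 3 = 1) (i : ℕ) : chi3 (p ^ i) = 1 := by
  induction i with
  | zero => simp [chi3]
  | succ n ih => rw [pow_succ, chi3_mul, ih]; simp [chi3, hsplit]

lemma Ffun_prime_pow (p : ℕ) (hp : p.Prime) (hsplit : p % 3 = 1) (k : ℕ) :
    Ffun (p ^ k) = ∑ i ∈ range (k + 1), (p : ℤ) ^ (4 * i) := by
  rw [Ffun_apply, Nat.sum_divisors_prime_pow hp]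
  refine Finset.sum_congr rfl fun i _ => ?_
  rw [chi3_pow p hsplit, one_mul]
  push_cast
  ring

lemma Gfun_prime_pow (p : ℕ) (hp : p.Prime) (hsplit : p % 3 = 1) (k : ℕ) :
    Gfun (p ^ k) = ∑ i ∈ range (k + 1), (p : ℤ) ^ (4 * i) := by
  rw [Gfun_apply, Nat.sum_divisors_prime_pow hp]
  refine Finset.sum_congr rfl fun i hi => ?_
  have hik : i ≤ k := by simpa using Nat.lt_succ_iff.mp (Finset.mem_range.mp hi)
  rw [Nat.pow_div hik hp.pos, chi3_pow p hsplit, one_mul]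
  push_cast
  ring

theorem stmt1 (p : ℕ) (hp : p.Prime) (hp5 : 5 ≤ p) (hsplit : p % 3 = 1)
    (m r : ℕ) (hm : 1 ≤ m) (hr : 1 ≤ r) :
    ((p : ℤ) ^ (4 * r)) ∣ cMix (m * p ^ r) - cMix (m * p ^ (r - 1)) := by
  have hm0 : m ≠ 0 := by omega
  set a := m.factorization p with ha
  set M := m / p ^ a with hM
  have hcop : Nat.Coprime p M := Nat.coprime_ordCompl hp hm0
  have hmeq : m = p ^ a * M := (Nat.ordProj_mul_ordCompl_eq_self m p).symm
  set k := a + (r - 1) with hk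
  have h1 : m * p ^ r = M * p ^ (k + 1) := by
    rw [show k + 1 = a + r by omega, pow_add, hmeq]; ring
  have h2 : m * p ^ (r - 1) = M * p ^ k := by
    rw [hk, pow_add, hmeq]; ring
  have hcopM : ∀ j : ℕ, M.Coprime (p ^ j) := fun j => (hcop.symm).pow_right j
  have hFdiff : Ffun (M * p ^ (k + 1)) - Ffun (M * p ^ k)
      = Ffun M * (p : ℤ) ^ (4 * (k + 1)) := by
    rw [Ffun_mult.map_mul_of_coprime (hcopM (k + 1)),
      Ffun_mult.map_mul_of_coprime (hcopM k),
      Ffun_prime_pow p hp hsplit, Ffun_prime_pow p hp hsplit,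
      Finset.sum_range_succ (n := k + 1)]
    ring
  have hGdiff : Gfun (M * p ^ (k + 1)) - Gfun (M * p ^ k)
      = Gfun M * (p : ℤ) ^ (4 * (k + 1)) := by
    rw [Gfun_mult.map_mul_of_coprime (hcopM (k + 1)),
      Gfun_mult.map_mul_of_coprime (hcopM k),
      Gfun_prime_pow p hp hsplit, Gfun_prime_pow p hp hsplit,
      Finset.sum_range_succ (n := k + 1)]
    ring
  have key : cMix (m * p ^ r) - cMix (m * p ^ (r - 1))
      = (3 * Ffun M - 27 * Gfun M) * (p : ℤ) ^ (4 * (k + 1)) := by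
    rw [h1, h2, cMix_eq, cMix_eq]
    have := hFdiff
    have := hGdiff
    nlinarith [hFdiff, hGdiff]
  rw [key]
  have hle : 4 * r ≤ 4 * (k + 1) := by omega
  exact Dvd.dvd.mul_left (pow_dvd_pow _ hle) _
end

section
/- Let A ∈ ℤ[[q]] and H ∈ 1 + q·ℤ[[q]] be power series with integer coefficients. For a prime p and integers m ≥ 0, r ≥ 0, the coefficient of q^{m·p^r} in A(q)·H(q)^{m·p^r} is congruent mod p to the coefficient of q^m in Λ_p^r(A)(q)·H(q)^m, where Λ_p(Σ aₙqⁿ) = Σ a_{pn}qⁿ and Λ_p^r is the r-fold iterate. -/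
open PowerSeries

/-- The Cartier-type operator `Λ_p (Σ aₙ qⁿ) = Σ a_{pn} qⁿ`. -/
noncomputable def lam (p : ℕ) (f : PowerSeries ℤ) : PowerSeries ℤ :=
  PowerSeries.mk fun n => PowerSeries.coeff (p * n) f

section aux

variable {R : Type*} [CommRing R]

/-- General Cartier operator. -/
noncomputable def lamG (p : ℕ) (f : PowerSeries R) : PowerSeries R :=
  PowerSeries.mk fun n => PowerSeries.coeff (p * n) f

/-- `f(q) ↦ f(q^p)`. -/
noncomputable def sig (p : ℕ) (f : PowerSeries R) : PowerSeries R :=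
  PowerSeries.mk fun n => if p ∣ n then PowerSeries.coeff (n / p) f else 0

lemma coeff_sig (p n : ℕ) (f : PowerSeries R) :
    PowerSeries.coeff n (sig p f) = if p ∣ n then PowerSeries.coeff (n / p) f else 0 := by
  simp [sig]

lemma coeff_sig_mul (p : ℕ) (hp : 0 < p) (a : ℕ) (f : PowerSeries R) :
    PowerSeries.coeff (p * a) (sig p f) = PowerSeries.coeff a f := by
  rw [coeff_sig, if_pos ⟨a, rfl⟩, Nat.mul_div_cancel_left _ hp]

/-- Sums over the antidiagonal of `p*s` where terms vanish unless both coordinates are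
multiples of `p`. -/
lemma sum_antidiagonal_mul (p : ℕ) (hp : 0 < p) (s : ℕ) (F : ℕ × ℕ → R)
    (hF : ∀ x ∈ Finset.HasAntidiagonal.antidiagonal (p * s), ¬(p ∣ x.1 ∧ p ∣ x.2) → F x = 0) :
    ∑ x ∈ Finset.HasAntidiagonal.antidiagonal (p * s), F x
      = ∑ x ∈ Finset.HasAntidiagonal.antidiagonal s, F (p * x.1, p * x.2) := by
  have himg : (Finset.HasAntidiagonal.antidiagonal s).image (fun y : ℕ × ℕ => (p * y.1, p * y.2)) ⊆
      Finset.HasAntidiagonal.antidiagonal (p * s) := by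
    intro x hx
    simp only [Finset.mem_image, Finset.HasAntidiagonal.mem_antidiagonal] at hx ⊢
    obtain ⟨y, hy, rfl⟩ := hx
    rw [← Nat.mul_add, hy]
  rw [← Finset.sum_subset himg, Finset.sum_image]
  · intro x hx y hy hxy
    have h1 : p * x.1 = p * y.1 := congrArg Prod.fst hxy
    have h2 : p * x.2 = p * y.2 := congrArg Prod.snd hxy
    exact Prod.ext (Nat.eq_of_mul_eq_mul_left hp h1) (Nat.eq_of_mul_eq_mul_left hp h2)
  · rintro ⟨i, j⟩ hx hx'
    refine hF (i, j) hx ?_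
    rintro ⟨⟨a, ha⟩, ⟨b, hb⟩⟩
    simp only at ha hb
    subst ha hb
    refine hx' ?_
    simp only [Finset.mem_image, Finset.HasAntidiagonal.mem_antidiagonal]
    refine ⟨(a, b), ?_, rfl⟩
    have := Finset.HasAntidiagonal.mem_antidiagonal.mp hx
    simp only [← Nat.mul_add] at this
    exact Nat.eq_of_mul_eq_mul_left hp this

lemma sig_mul (p : ℕ) (hp : 0 < p) (f g : PowerSeries R) :
    sig p (f * g) = sig p f * sig p g := by
  ext n
  rw [coeff_sig]
  by_cases h : p ∣ n
  · obtain ⟨s, rfl⟩ := h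
    have hv : ∀ x ∈ Finset.HasAntidiagonal.antidiagonal (p * s), ¬(p ∣ x.1 ∧ p ∣ x.2) →
        PowerSeries.coeff x.1 (sig p f) * PowerSeries.coeff x.2 (sig p g) = 0 := by
      intro x hx hx'
      rcases Decidable.not_and_iff_or_not.mp hx' with h1 | h1
      · rw [coeff_sig, if_neg h1, zero_mul]
      · rw [coeff_sig p x.2, if_neg h1, mul_zero]
    rw [if_pos ⟨s, rfl⟩, Nat.mul_div_cancel_left _ hp, PowerSeries.coeff_mul,
      PowerSeries.coeff_mul, sum_antidiagonal_mul p hp s _ hv]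
    exact Finset.sum_congr rfl fun x hx => by
      rw [coeff_sig_mul p hp, coeff_sig_mul p hp]
  · rw [if_neg h, PowerSeries.coeff_mul]
    refine (Finset.sum_eq_zero fun x hx => ?_).symm
    have hx1 := Finset.HasAntidiagonal.mem_antidiagonal.mp hx
    by_cases h1 : p ∣ x.1
    · have h2 : ¬ p ∣ x.2 := fun h2 => h (hx1 ▸ Nat.dvd_add h1 h2)
      rw [coeff_sig p x.2, if_neg h2, mul_zero]
    · rw [coeff_sig, if_neg h1, zero_mul]

lemma sig_pow (p : ℕ) (hp : 0 < p) (f : PowerSeries R) (m : ℕ) :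
    sig p (f ^ m) = (sig p f) ^ m := by
  induction m with
  | zero =>
    simp only [pow_zero]
    ext n
    simp only [coeff_sig, PowerSeries.coeff_one]
    rcases Nat.eq_zero_or_pos n with rfl | hn
    · simp
    · rw [if_neg hn.ne']
      split_ifs with hd hz
      · obtain ⟨k, rfl⟩ := hd
        rw [Nat.mul_div_cancel_left _ hp] at hz
        subst hz
        simp at hn
      · rfl
      · rfl
  | succ k ih => rw [pow_succ, pow_succ, sig_mul p hp, ih]

/-- Key exact coefficient identity: `[q^{pm}] A · σ_p(B) = [q^m] Λ_p(A) · B`. -/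
lemma coeff_mul_sig (p : ℕ) (hp : 0 < p) (m : ℕ) (A B : PowerSeries R) :
    PowerSeries.coeff (p * m) (A * sig p B) = PowerSeries.coeff m (lamG p A * B) := by
  have hv : ∀ x ∈ Finset.HasAntidiagonal.antidiagonal (p * m), ¬(p ∣ x.1 ∧ p ∣ x.2) →
      PowerSeries.coeff x.1 A * PowerSeries.coeff x.2 (sig p B) = 0 := by
    intro x hx hx'
    by_cases h2 : p ∣ x.2
    · have hx1 := Finset.HasAntidiagonal.mem_antidiagonal.mp hx
      have h1 : p ∣ x.1 := by
        have hx2 : x.1 = p * m - x.2 := by omega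
        rw [hx2]
        exact Nat.dvd_sub ⟨m, rfl⟩ h2
      exact absurd ⟨h1, h2⟩ hx'
    · rw [coeff_sig, if_neg h2, mul_zero]
  rw [PowerSeries.coeff_mul, PowerSeries.coeff_mul, sum_antidiagonal_mul p hp m _ hv]
  refine Finset.sum_congr rfl fun x hx => ?_
  rw [coeff_sig_mul p hp]
  congr 1
  simp [lamG]

/-- Frobenius: over `ZMod p`, `f ^ p = f(q^p)`. -/
lemma pow_p_eq_sig (p : ℕ) (hp : p.Prime) (f : PowerSeries (ZMod p)) :
    f ^ p = sig p f := by
  haveI : Fact p.Prime := ⟨hp⟩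
  ext n
  set T : Polynomial (ZMod p) := PowerSeries.trunc (n + 1) f with hT
  have hdvd : (PowerSeries.X : PowerSeries (ZMod p)) ^ (n + 1) ∣ f - (T : PowerSeries (ZMod p)) := by
    rw [PowerSeries.X_pow_dvd_iff]
    intro i hi
    rw [map_sub, Polynomial.coeff_coe, hT, PowerSeries.coeff_trunc, if_pos hi, sub_self]
  have hdvd2 : (PowerSeries.X : PowerSeries (ZMod p)) ^ (n + 1) ∣
      f ^ p - (T : PowerSeries (ZMod p)) ^ p :=
    dvd_trans hdvd (sub_dvd_pow_sub_pow _ _ p)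
  have hco : PowerSeries.coeff n (f ^ p) =
      PowerSeries.coeff n ((T : PowerSeries (ZMod p)) ^ p) := by
    have := PowerSeries.X_pow_dvd_iff.mp hdvd2 n (Nat.lt_succ_self n)
    rw [map_sub, sub_eq_zero] at this
    exact this
  have hTp : (T ^ p : Polynomial (ZMod p)) = Polynomial.expand (ZMod p) p T := by
    rw [← Polynomial.map_frobenius_expand p]
    ext k
    rw [Polynomial.coeff_map]
    exact ZMod.pow_card _
  rw [hco, ← Polynomial.coe_pow, Polynomial.coeff_coe, hTp, coeff_sig,
    Polynomial.coeff_expand hp.pos]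
  by_cases h : p ∣ n
  · rw [if_pos h, if_pos h, hT, PowerSeries.coeff_trunc, if_pos]
    exact Nat.lt_succ_of_le (Nat.div_le_self n p)
  · rw [if_neg h, if_neg h]

end aux

lemma map_lam (p : ℕ) (f : PowerSeries ℤ) :
    PowerSeries.map (Int.castRingHom (ZMod p)) (lam p f)
      = lamG p (PowerSeries.map (Int.castRingHom (ZMod p)) f) := by
  ext n
  simp [lam, lamG, PowerSeries.coeff_map]

lemma step (p : ℕ) (hp : p.Prime) (A H : PowerSeries ℤ) (m : ℕ) :
    (p : ℤ) ∣ PowerSeries.coeff (p * m) (A * H ^ (p * m))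
      - PowerSeries.coeff m (lam p A * H ^ m) := by
  haveI : Fact p.Prime := ⟨hp⟩
  rw [← ZMod.intCast_zmod_eq_zero_iff_dvd]
  push_cast
  rw [sub_eq_zero]
  set φ := Int.castRingHom (ZMod p) with hφ
  have h1 : ((PowerSeries.coeff (p * m) (A * H ^ (p * m)) : ℤ) : ZMod p)
      = PowerSeries.coeff (p * m)
        (PowerSeries.map φ A * (PowerSeries.map φ H) ^ (p * m)) := by
    rw [← map_pow, ← map_mul, PowerSeries.coeff_map]
    rfl
  have h2 : ((PowerSeries.coeff m (lam p A * H ^ m) : ℤ) : ZMod p)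
      = PowerSeries.coeff m
        (lamG p (PowerSeries.map φ A) * (PowerSeries.map φ H) ^ m) := by
    rw [← map_lam, ← map_pow, ← map_mul, PowerSeries.coeff_map]
    rfl
  rw [h1, h2]
  have h3 : (PowerSeries.map φ H) ^ (p * m) = sig p ((PowerSeries.map φ H) ^ m) := by
    rw [mul_comm p m, pow_mul, pow_p_eq_sig p hp, sig_pow p hp.pos]
  rw [h3, coeff_mul_sig p hp.pos]

theorem stmt13 (p : ℕ) (hp : p.Prime) (A H : PowerSeries ℤ)
    (hH : PowerSeries.constantCoeff H = 1) (m r : ℕ) :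
    (p : ℤ) ∣ PowerSeries.coeff (m * p ^ r) (A * H ^ (m * p ^ r))
      - PowerSeries.coeff m ((lam p)^[r] A * H ^ m) := by
  induction r generalizing A with
  | zero => simp
  | succ r ih =>
    have key : m * p ^ (r + 1) = p * (m * p ^ r) := by ring
    rw [key]
    have h1 := step p hp A H (m * p ^ r)
    have h2 := ih (lam p A)
    rw [Function.iterate_succ_apply]
    have := dvd_add h1 h2
    rwa [sub_add_sub_cancel] at this
end
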